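/- Let (v₁, v₂, v₃) and (w₁, w₂, w₃) be triples of vectors in ℂ² with π(v₁, v₂, v₃) = π(w₁, w₂, w₃) ≠ (0,0,0), where π(v₁, v₂, v₃) = (det(v₂, v₃), det(v₁, v₃), det(v₁, v₂)). Then there exists a unique g ∈ SL₂(ℂ) with g·vᵢ = wᵢ for i = 1, 2, 3. -/

import Mathlib

def det2 (u w : Fin 2 → ℂ) : ℂ := u 0 * w 1 - u 1 * w 0

lemma key (a b c a' b' c' : Fin 2 → ℂ)
    (hd : det2 a b ≠ 0)
    (h1 : det2 a b = det2 a' b')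
    (h2 : det2 a c = det2 a' c')
    (h3 : det2 b c = det2 b' c') :
    ∃! g : Matrix.SpecialLinearGroup (Fin 2) ℂ,
      (g : Matrix (Fin 2) (Fin 2) ℂ).mulVec a = a' ∧
      (g : Matrix (Fin 2) (Fin 2) ℂ).mulVec b = b' ∧
      (g : Matrix (Fin 2) (Fin 2) ℂ).mulVec c = c' := by
  unfold det2 at hd h1 h2 h3
  set d : ℂ := a 0 * b 1 - a 1 * b 0 with hdd
  have hgdet : Matrix.det (d⁻¹ • !![a' 0 * b 1 - b' 0 * a 1, b' 0 * a 0 - a' 0 * b 0;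
      a' 1 * b 1 - b' 1 * a 1, b' 1 * a 0 - a' 1 * b 0]) = 1 := by
    rw [Matrix.det_smul, Matrix.det_fin_two_of, Fintype.card_fin]
    field_simp
    linear_combination (-d) * h1
  refine ⟨⟨_, hgdet⟩, ⟨?_, ?_, ?_⟩, ?_⟩
  · funext i
    fin_cases i <;>
      simp [Matrix.mulVec, dotProduct, Fin.sum_univ_two] <;>
      field_simp <;> ring
  · funext i
    fin_cases i <;>
      simp [Matrix.mulVec, dotProduct, Fin.sum_univ_two] <;>
      field_simp <;> ring
  · funext i
    fin_cases i <;>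
      simp [Matrix.mulVec, dotProduct, Fin.sum_univ_two] <;>
      field_simp
    · linear_combination (-(a' 0)) * h3 + b' 0 * h2 - c' 0 * h1
    · linear_combination (-(a' 1)) * h3 + b' 1 * h2 - c' 1 * h1
  · rintro g ⟨hga, hgb, -⟩
    have hM : IsUnit (!![a 0, b 0; a 1, b 1] : Matrix (Fin 2) (Fin 2) ℂ) := by
      rw [Matrix.isUnit_iff_isUnit_det, Matrix.det_fin_two_of, isUnit_iff_ne_zero]
      intro h; apply hd; linear_combination h
    have hGa : (↑g : Matrix (Fin 2) (Fin 2) ℂ).mulVec a =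
        (d⁻¹ • !![a' 0 * b 1 - b' 0 * a 1, b' 0 * a 0 - a' 0 * b 0;
          a' 1 * b 1 - b' 1 * a 1, b' 1 * a 0 - a' 1 * b 0]).mulVec a := by
      rw [hga]
      funext i
      fin_cases i <;>
        simp [Matrix.mulVec, dotProduct, Fin.sum_univ_two] <;>
        field_simp <;> ring
    have hGb : (↑g : Matrix (Fin 2) (Fin 2) ℂ).mulVec b =
        (d⁻¹ • !![a' 0 * b 1 - b' 0 * a 1, b' 0 * a 0 - a' 0 * b 0;
          a' 1 * b 1 - b' 1 * a 1, b' 1 * a 0 - a' 1 * b 0]).mulVec b := by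
      rw [hgb]
      funext i
      fin_cases i <;>
        simp [Matrix.mulVec, dotProduct, Fin.sum_univ_two] <;>
        field_simp <;> ring
    apply Subtype.ext
    have hmul : (↑g : Matrix (Fin 2) (Fin 2) ℂ) * !![a 0, b 0; a 1, b 1] =
        (d⁻¹ • !![a' 0 * b 1 - b' 0 * a 1, b' 0 * a 0 - a' 0 * b 0;
          a' 1 * b 1 - b' 1 * a 1, b' 1 * a 0 - a' 1 * b 0]) * !![a 0, b 0; a 1, b 1] := by
      have ha0 := congrFun hGa 0
      have ha1 := congrFun hGa 1
      have hb0 := congrFun hGb 0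
      have hb1 := congrFun hGb 1
      simp [Matrix.mulVec, dotProduct, Fin.sum_univ_two] at ha0 ha1 hb0 hb1
      ext i j
      fin_cases i <;> fin_cases j <;>
        simp [Matrix.mul_apply, Fin.sum_univ_two]
      · linear_combination ha0
      · linear_combination hb0
      · linear_combination ha1
      · linear_combination hb1
    exact hM.mul_right_cancel hmul

def quotMap (v₁ v₂ v₃ : Fin 2 → ℂ) : ℂ × ℂ × ℂ :=
  (det2 v₂ v₃, det2 v₁ v₃, det2 v₁ v₂)

theorem fiber_single_free_orbit (v₁ v₂ v₃ w₁ w₂ w₃ : Fin 2 → ℂ)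
    (heq : quotMap v₁ v₂ v₃ = quotMap w₁ w₂ w₃)
    (hne : quotMap v₁ v₂ v₃ ≠ (0, 0, 0)) :
    ∃! g : Matrix.SpecialLinearGroup (Fin 2) ℂ,
      (g : Matrix (Fin 2) (Fin 2) ℂ).mulVec v₁ = w₁ ∧
      (g : Matrix (Fin 2) (Fin 2) ℂ).mulVec v₂ = w₂ ∧
      (g : Matrix (Fin 2) (Fin 2) ℂ).mulVec v₃ = w₃ := by
  unfold quotMap at heq hne
  rw [Prod.mk.injEq, Prod.mk.injEq] at heq
  obtain ⟨e23, e13, e12⟩ := heq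
  have hcase : det2 v₂ v₃ ≠ 0 ∨ det2 v₁ v₃ ≠ 0 ∨ det2 v₁ v₂ ≠ 0 := by
    by_contra h
    push_neg at h
    exact hne (by simp [h.1, h.2.1, h.2.2])
  rcases hcase with h | h | h
  · -- basis v₂, v₃; apply key with a=v₂, b=v₃, c=v₁
    have h2 : det2 v₂ v₁ = det2 w₂ w₁ := by unfold det2 at *; linear_combination -e12
    have h3 : det2 v₃ v₁ = det2 w₃ w₁ := by unfold det2 at *; linear_combination -e13
    obtain ⟨g, ⟨hg2, hg3, hg1⟩, hu⟩ := key v₂ v₃ v₁ w₂ w₃ w₁ h e23 h2 h3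
    exact ⟨g, ⟨hg1, hg2, hg3⟩, fun y ⟨k1, k2, k3⟩ => hu y ⟨k2, k3, k1⟩⟩
  · -- basis v₁, v₃; a=v₁, b=v₃, c=v₂
    have h3 : det2 v₃ v₂ = det2 w₃ w₂ := by unfold det2 at *; linear_combination -e23
    obtain ⟨g, ⟨hg1, hg3, hg2⟩, hu⟩ := key v₁ v₃ v₂ w₁ w₃ w₂ h e13 e12 h3
    exact ⟨g, ⟨hg1, hg2, hg3⟩, fun y ⟨k1, k2, k3⟩ => hu y ⟨k1, k3, k2⟩⟩
  · obtain ⟨g, ⟨hg1, hg2, hg3⟩, hu⟩ := key v₁ v₂ v₃ w₁ w₂ w₃ h e12 e13 e23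
    exact ⟨g, ⟨hg1, hg2, hg3⟩, fun y ⟨k1, k2, k3⟩ => hu y ⟨k1, k2, k3⟩⟩
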